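/- Let C_1, ..., C_k be a sequence of length-constrained cuts in graph G with edge lengths, with witness demands D_1, ..., D_k such that each D_i is an A-respecting h-length demand that is hs-separated by C_i in the graph G − (Σ_{j<i} C_j)_{hs}. Then the demand matching graph G(D_1,...,D_k) is an s-parallel-greedy graph on |A| vertices. -/

import Mathlib

open SimpleGraph Finset

variable {V : Type*}

/-- The length of a walk with respect to the edge length function `ℓ`. -/
def walkLen {G : SimpleGraph V} (ℓ : Sym2 V → ℝ) {u v : V} (p : G.Walk u v) : ℝ :=
  (p.edges.map ℓ).sum

/-- A demand `D` is `A`-respecting if every vertex sends and receives at most `A v`. -/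
def Respecting [Fintype V] (A : V → ℕ) (D : V → V → ℕ) : Prop :=
  ∀ v, (∑ w, D v w) ≤ A v ∧ (∑ w, D w v) ≤ A v

/-- A demand `D` is `h`-length (w.r.t. edge lengths `ℓ`) if positive demand pairs are at
distance at most `h`, i.e. joined by a walk of length at most `h`. -/
def HLength (G : SimpleGraph V) (ℓ : Sym2 V → ℝ) (h : ℝ) (D : V → V → ℕ) : Prop :=
  ∀ u v, 0 < D u v → ∃ p : G.Walk u v, walkLen ℓ p ≤ h

/-- `u` and `v` are at distance strictly greater than `h` w.r.t. edge lengths `ℓ`. -/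
def FarApart (G : SimpleGraph V) (ℓ : Sym2 V → ℝ) (h : ℝ) (u v : V) : Prop :=
  ∀ p : G.Walk u v, h < walkLen ℓ p

/-- The demand `D` is `hs`-separated by the cut `C` (applied at scale `hs` to the edge
lengths `ℓ`): every positive demand pair is at distance `> hs` in `G − C_{hs}`. -/
def SeparatedDemand (G : SimpleGraph V) (ℓ : Sym2 V → ℝ) (hs : ℝ) (C : Sym2 V → ℝ)
    (D : V → V → ℕ) : Prop :=
  ∀ u v, 0 < D u v → FarApart G (fun e => ℓ e + hs * C e) hs u v

/-- The size `|C| = Σ_e U_e·C(e)` of a length-constrained cut `C`, with capacities `cap`. -/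
noncomputable def cutSize [Fintype V] [DecidableEq V] (G : SimpleGraph V)
    [DecidableRel G.Adj] (cap : Sym2 V → ℕ) (C : Sym2 V → ℝ) : ℝ :=
  ∑ e ∈ G.edgeFinset, (cap e : ℝ) * C e

/-- The `(h,s)`-length demand-size of the cut `C` w.r.t. the node-weighting `A`, in the
graph `G` with edge lengths `ℓ`: the maximum size of an `A`-respecting `h`-length demand
which is `hs`-separated by `C`. -/
noncomputable def demandSize [Fintype V] (G : SimpleGraph V) (ℓ : Sym2 V → ℝ)
    (A : V → ℕ) (C : Sym2 V → ℝ) (h hs : ℝ) : ℕ :=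
  sSup {n | ∃ D : V → V → ℕ, Respecting A D ∧ HLength G ℓ h D ∧
    SeparatedDemand G ℓ hs C D ∧ n = ∑ u, ∑ v, D u v}

/-- `M` witnesses that `G` is `s`-parallel-greedy. -/
def IsParallelGreedy {W : Type*} (G : SimpleGraph W) (s k : ℕ)
    (M : Fin k → SimpleGraph W) : Prop :=
  (∀ i, M i ≤ G) ∧
  (∀ e ∈ G.edgeSet, ∃ i, e ∈ (M i).edgeSet) ∧
  (Pairwise fun i j => Disjoint (M i).edgeSet (M j).edgeSet) ∧
  (∀ i, ∀ v u w : W, (M i).Adj v u → (M i).Adj v w → u = w) ∧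
  (∀ i : Fin k, ∀ u v : W, (M i).Adj u v →
    ∀ p : (⨆ j : {j : Fin k // j < i}, M j.1).Walk u v, s < p.length)

lemma walkLen_mono {G : SimpleGraph V} (ℓ₁ ℓ₂ : Sym2 V → ℝ) (hle : ∀ e, ℓ₁ e ≤ ℓ₂ e)
    {u v : V} (p : G.Walk u v) : walkLen ℓ₁ p ≤ walkLen ℓ₂ p :=
  List.sum_le_sum (by simpa using fun e _ => hle e)

lemma walkLen_append {G : SimpleGraph V} (ℓ : Sym2 V → ℝ) {u v w : V}
    (p : G.Walk u v) (q : G.Walk v w) :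
    walkLen ℓ (p.append q) = walkLen ℓ p + walkLen ℓ q := by
  simp [walkLen, SimpleGraph.Walk.edges_append]

lemma walk_project {W : Type*} (G : SimpleGraph V) (Γ : SimpleGraph W) (f : W → V)
    (ℓ' : Sym2 V → ℝ) (h : ℝ) (hh : 0 ≤ h)
    (hΓ : ∀ x y : W, Γ.Adj x y → ∃ q : G.Walk (f x) (f y), walkLen ℓ' q ≤ h) :
    ∀ {x y : W} (p : Γ.Walk x y),
      ∃ q : G.Walk (f x) (f y), walkLen ℓ' q ≤ p.length * h := by
  intro x y p
  induction p with
  | nil => exact ⟨.nil, by simp [walkLen]⟩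
  | @cons a b c hadj p ih =>
    obtain ⟨q1, hq1⟩ := hΓ _ _ hadj
    obtain ⟨q2, hq2⟩ := ih
    refine ⟨q1.append q2, ?_⟩
    rw [walkLen_append]
    simp only [SimpleGraph.Walk.length_cons]
    push_cast
    linarith

/-- Let `C_1, …, C_k` be length-constrained cuts with witness demands `D_1, …, D_k`, where
each `D_i` is an `A`-respecting `h`-length demand which is `hs`-separated by `C_i` in the
graph `G − (Σ_{j<i} C_j)_{hs}`. Then the demand matching graph `H` of `(D_1,…,D_k)`
(which has `A v` copies of each vertex `v`, and for each `i` a matching `E i` with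
`D_i(u,v)` edges between the copies of `u` and the copies of `v`) is an
`s`-parallel-greedy graph on `|A| = Σ_v A v` vertices. -/
theorem demand_matching_graph_parallel_greedy
    [Fintype V] [DecidableEq V] (G : SimpleGraph V) [DecidableRel G.Adj]
    (ℓ : Sym2 V → ℝ) (hℓ : ∀ e, 0 ≤ ℓ e)
    (h : ℝ) (hh : 1 ≤ h) (s : ℕ) (hs : 2 ≤ s)
    (A : V → ℕ) (hA : ∀ v, A v ≤ G.degree v)
    (k : ℕ) (C : Fin k → Sym2 V → ℝ) (hC : ∀ i e, 0 ≤ C i e)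
    (D : Fin k → V → V → ℕ)
    (hresp : ∀ i, Respecting A (D i))
    (hlen : ∀ i, HLength G
      (fun e => ℓ e + h * s * ∑ j ∈ Finset.univ.filter (· < i), C j e) h (D i))
    (hsep : ∀ i, SeparatedDemand G
      (fun e => ℓ e + h * s * ∑ j ∈ Finset.univ.filter (· < i), C j e)
      (h * s) (C i) (D i))
    (H : SimpleGraph ((v : V) × Fin (A v)))
    (E : Fin k → SimpleGraph ((v : V) × Fin (A v)))
    (hmatching : ∀ i, ∀ a b c, (E i).Adj a b → (E i).Adj a c → b = c)
    (hdisj : Pairwise fun i j => Disjoint (E i).edgeSet (E j).edgeSet)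
    (hunion : H = ⨆ i, E i)
    (hcount : ∀ i (u v : V),
      {e ∈ (E i).edgeSet | ∃ (a : Fin (A u)) (b : Fin (A v)),
        e = Sym2.mk ⟨u, a⟩ ⟨v, b⟩}.ncard = D i u v) :
    Fintype.card ((v : V) × Fin (A v)) = ∑ v, A v ∧
      ∃ M : Fin k → SimpleGraph ((v : V) × Fin (A v)), IsParallelGreedy H s k M := by
  have hhs : (0:ℝ) ≤ h * s := by positivity
  have hh0 : (0:ℝ) ≤ h := le_trans zero_le_one hh
  -- every edge of `E i` between a copy of `u` and a copy of `v` witnesses `0 < D i u v`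
  have hDpos : ∀ (i : Fin k) (x y : (v : V) × Fin (A v)), (E i).Adj x y →
      0 < D i x.1 y.1 := by
    intro i x y hxy
    rw [← hcount i x.1 y.1, Set.ncard_pos (Set.toFinite _)]
    exact ⟨Sym2.mk x y, (E i).mem_edgeSet.2 hxy, x.2, y.2, rfl⟩
  refine ⟨by simp, fun i => E i.rev, ?_, ?_, ?_, fun i => hmatching i.rev, ?_⟩
  · intro i; rw [hunion]; exact le_iSup E i.rev
  · intro e he
    rw [hunion] at he
    induction e with
    | _ a b =>
      rw [mem_edgeSet, iSup_adj] at he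
      obtain ⟨j, hj⟩ := he
      exact ⟨j.rev, by simpa [mem_edgeSet, Fin.rev_rev] using hj⟩
  · exact fun i j hij => hdisj fun hrev => hij (Fin.rev_injective hrev)
  · intro i u v huv p
    by_contra hcon
    push_neg at hcon
    set i' := i.rev with hi'
    set ℓ' : Sym2 V → ℝ := fun e =>
      (ℓ e + h * s * ∑ j ∈ Finset.univ.filter (· < i'), C j e) + h * s * C i' e with hℓ'
    have key : ∀ x y : (v : V) × Fin (A v),
        (⨆ j : {j : Fin k // j < i}, E j.1.rev).Adj x y →
        ∃ q : G.Walk x.1 y.1, walkLen ℓ' q ≤ h := by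
      intro x y hxy
      rw [iSup_adj] at hxy
      obtain ⟨⟨j, hj⟩, hadj⟩ := hxy
      obtain ⟨q, hq⟩ := hlen j.rev _ _ (hDpos j.rev x y hadj)
      refine ⟨q, le_trans (walkLen_mono _ _ ?_ q) hq⟩
      intro e
      have hlt : i' < j.rev := Fin.rev_lt_rev.2 hj
      have hsub : insert i' (Finset.univ.filter (· < i')) ⊆
          Finset.univ.filter (· < j.rev) := by
        intro t ht
        simp only [Finset.mem_insert, Finset.mem_filter, Finset.mem_univ, true_and] at *
        rcases ht with rfl | ht
        · exact hlt
        · exact ht.trans hlt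
      have hins : (∑ t ∈ insert i' (Finset.univ.filter (· < i')), C t e) =
          C i' e + ∑ t ∈ Finset.univ.filter (· < i'), C t e :=
        Finset.sum_insert (by simp)
      have hsum : (∑ t ∈ Finset.univ.filter (· < i'), C t e) + C i' e ≤
          ∑ t ∈ Finset.univ.filter (· < j.rev), C t e := by
        rw [add_comm, ← hins]
        exact Finset.sum_le_sum_of_subset_of_nonneg hsub fun t _ _ => hC t e
      have := mul_le_mul_of_nonneg_left hsum hhs
      simp only [hℓ']
      ring_nf
      ring_nf at this
      linarith
    obtain ⟨q, hq⟩ := walk_project G _ (fun x => x.1) ℓ' h hh0 key p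
    have hfar := hsep i' u.1 v.1 (hDpos i' u v huv) q
    have hle : walkLen ℓ' q ≤ h * s := by
      have hps : (p.length : ℝ) ≤ s := by exact_mod_cast hcon
      nlinarith
    exact absurd (lt_of_lt_of_le hfar hle) (lt_irrefl _)
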